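/- If A ~ sExp(λ₁+λ₂, c), B ~ sExp(λ₁, c), C ~ sExp(λ₂, c) are independent (λ₁, λ₂ > 0, c ∈ ℝ), then (min{B,C}, A + max{B−C,0}, A − min{B−C,0}) has the same joint distribution as (A, B, C). -/

import Mathlib

open MeasureTheory

/-- The shifted exponential distribution `sExp(l, c)`:
density `l * exp (-l * (x - c))` on `[c, ∞)`. -/
noncomputable def sExpMeasure (l c : ℝ) : Measure ℝ :=
  volume.withDensity fun x =>
    ENNReal.ofReal (if c ≤ x then l * Real.exp (-l * (x - c)) else 0)

namespace UdTodaAux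

open scoped ENNReal

variable {α β : Type*} [MeasurableSpace α] [MeasurableSpace β]

lemma prod_withDensity {μ : Measure α} {ν : Measure β} [SigmaFinite μ] [SigmaFinite ν]
    {f : α → ℝ≥0∞} {g : β → ℝ≥0∞} (hf : Measurable f) (hg : Measurable g)
    [SigmaFinite (μ.withDensity f)] [SigmaFinite (ν.withDensity g)] :
    (μ.withDensity f).prod (ν.withDensity g)
      = (μ.prod ν).withDensity (fun p => f p.1 * g p.2) := by
  refine Measure.prod_eq (μν := (μ.prod ν).withDensity fun p => f p.1 * g p.2)
    fun s t hs ht => ?_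
  rw [withDensity_apply _ (hs.prod ht), ← Measure.prod_restrict,
    lintegral_prod_mul hf.aemeasurable hg.aemeasurable,
    withDensity_apply _ hs, withDensity_apply _ ht]

lemma map_withDensity_equiv (e : α ≃ᵐ β) (μ : Measure α) {f : β → ℝ≥0∞}
    (hf : Measurable f) :
    (μ.withDensity (fun x => f (e x))).map e = (μ.map e).withDensity f := by
  ext s hs
  rw [Measure.map_apply e.measurable hs, withDensity_apply _ hs,
    withDensity_apply _ (e.measurable hs),
    setLIntegral_map hs hf e.measurable]

/-- the ultra-discrete Toda map -/
def F (p : ℝ × ℝ × ℝ) : ℝ × ℝ × ℝ :=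
  (min p.2.1 p.2.2, p.1 + max (p.2.1 - p.2.2) 0, p.1 - min (p.2.1 - p.2.2) 0)

lemma F_measurable : Measurable F := by
  unfold F; fun_prop

lemma F_involutive : Function.Involutive F := by
  intro p
  obtain ⟨a, b, c⟩ := p
  rcases le_total b c with h | h
  · have h1 : b - c ≤ 0 := sub_nonpos.2 h
    simp only [F, min_eq_left h, max_eq_right h1, min_eq_left h1, add_zero]
    have h2 : a ≤ a - (b - c) := by linarith
    simp only [min_eq_left h2, max_eq_right (by linarith : a - (a - (b-c)) ≤ 0),
      min_eq_left (by linarith : a - (a - (b-c)) ≤ 0)]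
    refine Prod.ext rfl (Prod.ext ?_ ?_) <;> simp [min_eq_left h]
  · have h1 : (0:ℝ) ≤ b - c := sub_nonneg.2 h
    simp only [F, min_eq_right h, max_eq_left h1, min_eq_right (le_refl _), min_eq_right h1,
      sub_zero]
    have h2 : a ≤ a + (b - c) := by linarith
    simp only [min_eq_right h2, max_eq_left (by linarith : 0 ≤ a + (b-c) - a),
      min_eq_right (by linarith : 0 ≤ a + (b-c) - a)]
    refine Prod.ext rfl (Prod.ext ?_ ?_) <;> simp [min_eq_right h]

/-- `F` as a measurable equivalence. -/
def FE : (ℝ × ℝ × ℝ) ≃ᵐ (ℝ × ℝ × ℝ) where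
  toEquiv := Function.Involutive.toPerm F F_involutive
  measurable_toFun := F_measurable
  measurable_invFun := F_measurable

lemma FE_coe : ⇑FE = F := rfl

noncomputable def vol3 : Measure (ℝ × ℝ × ℝ) :=
  (volume : Measure ℝ).prod ((volume : Measure ℝ).prod (volume : Measure ℝ))

instance : SigmaFinite vol3 := by unfold vol3; infer_instance

/-- shear `(x, y) ↦ (x, y + x)` preserves 2-d Lebesgue measure -/
lemma mp_shear :
    MeasurePreserving (fun q : ℝ × ℝ => (q.1, q.2 + q.1))
      ((volume : Measure ℝ).prod volume) ((volume : Measure ℝ).prod volume) :=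
  MeasurePreserving.skew_product (MeasurePreserving.id _)
    (by fun_prop) (ae_of_all _ fun x => (measurePreserving_add_right volume x).map_eq)

lemma mp_shear' :
    MeasurePreserving (fun q : ℝ × ℝ => (q.1, q.2 - q.1))
      ((volume : Measure ℝ).prod volume) ((volume : Measure ℝ).prod volume) :=
  MeasurePreserving.skew_product (MeasurePreserving.id _)
    (by fun_prop) (ae_of_all _ fun x => (measurePreserving_sub_right volume x).map_eq)

lemma mp_swap :
    MeasurePreserving (Prod.swap : ℝ × ℝ → ℝ × ℝ)
      ((volume : Measure ℝ).prod volume) ((volume : Measure ℝ).prod volume) :=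
  Measure.measurePreserving_swap

/-- `T₁ (a,b,c) = (c, a + (b - c), a)` preserves `vol3`. -/
lemma mp_T1 :
    MeasurePreserving (fun p : ℝ × ℝ × ℝ => (p.2.2, p.1 + (p.2.1 - p.2.2), p.1)) vol3 vol3 := by
  have h :
      (fun p : ℝ × ℝ × ℝ => (p.2.2, p.1 + (p.2.1 - p.2.2), p.1))
        = (Prod.map (id : ℝ → ℝ) (fun q : ℝ × ℝ => Prod.swap ((fun r : ℝ × ℝ => (r.1, r.2 + r.1)) (Prod.swap q))))
          ∘ (MeasurableEquiv.prodAssoc : (ℝ × ℝ) × ℝ ≃ᵐ ℝ × ℝ × ℝ)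
          ∘ (Prod.map (fun q : ℝ × ℝ => (q.1, q.2 - q.1)) (id : ℝ → ℝ))
          ∘ (Prod.map (Prod.swap : ℝ × ℝ → ℝ × ℝ) (id : ℝ → ℝ))
          ∘ (Prod.swap : ℝ × (ℝ × ℝ) → (ℝ × ℝ) × ℝ) := by
    funext p
    simp [MeasurableEquiv.prodAssoc, Prod.map, Prod.ext_iff]
    ring
  rw [h]
  have base : MeasurePreserving
      ((Prod.map (fun q : ℝ × ℝ => (q.1, q.2 - q.1)) (id : ℝ → ℝ))
        ∘ (Prod.map (Prod.swap : ℝ × ℝ → ℝ × ℝ) (id : ℝ → ℝ))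
        ∘ (Prod.swap : ℝ × (ℝ × ℝ) → (ℝ × ℝ) × ℝ)) vol3
      (((volume : Measure ℝ).prod volume).prod volume) :=
    ((mp_shear'.prod (MeasurePreserving.id _)).comp
      ((mp_swap.prod (MeasurePreserving.id _)).comp Measure.measurePreserving_swap))
  have hassoc : MeasurePreserving
      (MeasurableEquiv.prodAssoc : (ℝ × ℝ) × ℝ ≃ᵐ ℝ × ℝ × ℝ)
      (((volume : Measure ℝ).prod volume).prod volume) vol3 :=
    measurePreserving_prodAssoc _ _ _
  have hlast : MeasurePreserving
      (Prod.map (id : ℝ → ℝ) (fun q : ℝ × ℝ => Prod.swap ((fun r : ℝ × ℝ => (r.1, r.2 + r.1)) (Prod.swap q))))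
      vol3 vol3 :=
    (MeasurePreserving.id _).prod ((mp_swap.comp mp_shear).comp mp_swap)
  exact hlast.comp (hassoc.comp base)

/-- `T₂ (a,b,c) = (b, a, a + (c - b))` preserves `vol3`. -/
lemma mp_T2 :
    MeasurePreserving (fun p : ℝ × ℝ × ℝ => (p.2.1, p.1, p.1 + (p.2.2 - p.2.1))) vol3 vol3 := by
  have h :
      (fun p : ℝ × ℝ × ℝ => (p.2.1, p.1, p.1 + (p.2.2 - p.2.1)))
        = (Prod.map (id : ℝ → ℝ) (fun q : ℝ × ℝ => ((fun r : ℝ × ℝ => (r.1, r.2 + r.1)) (Prod.swap q))))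
          ∘ (MeasurableEquiv.prodAssoc : (ℝ × ℝ) × ℝ ≃ᵐ ℝ × ℝ × ℝ)
          ∘ (Prod.map (fun q : ℝ × ℝ => (q.1, q.2 - q.1)) (id : ℝ → ℝ))
          ∘ (Prod.swap : ℝ × (ℝ × ℝ) → (ℝ × ℝ) × ℝ) := by
    funext p
    simp [MeasurableEquiv.prodAssoc, Prod.map, Prod.ext_iff]
    ring
  rw [h]
  have base : MeasurePreserving
      ((Prod.map (fun q : ℝ × ℝ => (q.1, q.2 - q.1)) (id : ℝ → ℝ))
        ∘ (Prod.swap : ℝ × (ℝ × ℝ) → (ℝ × ℝ) × ℝ)) vol3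
      (((volume : Measure ℝ).prod volume).prod volume) :=
    (mp_shear'.prod (MeasurePreserving.id _)).comp Measure.measurePreserving_swap
  have hassoc : MeasurePreserving
      (MeasurableEquiv.prodAssoc : (ℝ × ℝ) × ℝ ≃ᵐ ℝ × ℝ × ℝ)
      (((volume : Measure ℝ).prod volume).prod volume) vol3 :=
    measurePreserving_prodAssoc _ _ _
  have hlast : MeasurePreserving
      (Prod.map (id : ℝ → ℝ) (fun q : ℝ × ℝ => ((fun r : ℝ × ℝ => (r.1, r.2 + r.1)) (Prod.swap q))))
      vol3 vol3 :=
    (MeasurePreserving.id _).prod (mp_shear.comp mp_swap)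
  exact hlast.comp (hassoc.comp base)

lemma diag2_null : ((volume : Measure ℝ).prod volume) {q : ℝ × ℝ | q.1 = q.2} = 0 := by
  rw [Measure.prod_apply (measurableSet_eq_fun (by fun_prop) (by fun_prop))]
  have h : ∀ x : ℝ, (volume : Measure ℝ) (Prod.mk x ⁻¹' {q : ℝ × ℝ | q.1 = q.2}) = 0 := by
    intro x
    have : (Prod.mk x ⁻¹' {q : ℝ × ℝ | q.1 = q.2}) = {x} := by
      ext y; simp [eq_comm]
    rw [this, Real.volume_singleton]
  simp only [h, lintegral_zero]

lemma diag_null : vol3 {p : ℝ × ℝ × ℝ | p.2.1 = p.2.2} = 0 := by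
  have hmeas : MeasurableSet {p : ℝ × ℝ × ℝ | p.2.1 = p.2.2} :=
    measurableSet_eq_fun (by fun_prop) (by fun_prop)
  rw [vol3, Measure.prod_apply hmeas]
  have h2 : ∀ a : ℝ, ((volume : Measure ℝ).prod volume)
      (Prod.mk a ⁻¹' {p : ℝ × ℝ × ℝ | p.2.1 = p.2.2}) = 0 := by
    intro a
    have : (Prod.mk a ⁻¹' {p : ℝ × ℝ × ℝ | p.2.1 = p.2.2}) = {q : ℝ × ℝ | q.1 = q.2} := rfl
    rw [this, diag2_null]
  simp only [h2, lintegral_zero]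

lemma mp_F : MeasurePreserving F vol3 vol3 := by
  refine ⟨F_measurable, ?_⟩
  set U : Set (ℝ × ℝ × ℝ) := {p | p.2.2 < p.2.1} with hU_def
  set V : Set (ℝ × ℝ × ℝ) := {p | p.2.1 < p.2.2} with hV_def
  have hU : MeasurableSet U := measurableSet_lt (by fun_prop) (by fun_prop)
  have hV : MeasurableSet V := measurableSet_lt (by fun_prop) (by fun_prop)
  have hUV : Disjoint U V := by
    rw [Set.disjoint_left]
    intro p hp hp'
    simp only [hU_def, Set.mem_setOf_eq] at hp
    simp only [hV_def, Set.mem_setOf_eq] at hp'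
    linarith
  have hcompl : (U ∪ V)ᶜ = {p : ℝ × ℝ × ℝ | p.2.1 = p.2.2} := by
    ext p
    simp only [Set.mem_compl_iff, Set.mem_union, hU_def, hV_def, Set.mem_setOf_eq]
    constructor
    · intro h; push_neg at h; exact le_antisymm h.1 h.2
    · intro h; simp [h]
  have hdecomp : vol3 = vol3.restrict U + vol3.restrict V := by
    rw [← Measure.restrict_union hUV hV]
    have h1 : vol3.restrict (U ∪ V) = vol3.restrict Set.univ :=
      Measure.restrict_congr_set (MeasureTheory.ae_eq_univ.2 (by rw [hcompl]; exact diag_null))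
    rw [h1, Measure.restrict_univ]
  have key : ∀ (T : ℝ × ℝ × ℝ → ℝ × ℝ × ℝ), MeasurePreserving T vol3 vol3 →
      ∀ (W : Set (ℝ × ℝ × ℝ)), MeasurableSet W → T ⁻¹' W = W →
      (∀ p ∈ W, F p = T p) → Measure.map F (vol3.restrict W) = vol3.restrict W := by
    intro T hT W hW hTW hFW
    have h1 : Measure.map F (vol3.restrict W) = Measure.map T (vol3.restrict W) :=
      Measure.map_congr ((ae_restrict_iff' hW).2 (ae_of_all _ hFW))
    rw [h1]
    conv_lhs => rw [← hTW]
    rw [← Measure.restrict_map hT.measurable hW, hT.map_eq]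
  have hkey1 : Measure.map F (vol3.restrict U) = vol3.restrict U := by
    refine key _ mp_T1 U hU ?_ ?_
    · ext p
      simp only [Set.mem_preimage, hU_def, Set.mem_setOf_eq]
      constructor <;> intro h <;> linarith
    · intro p hp
      simp only [hU_def, Set.mem_setOf_eq] at hp
      have h1 : (0:ℝ) ≤ p.2.1 - p.2.2 := by linarith
      simp only [F, min_eq_right hp.le, max_eq_left h1, min_eq_right h1, sub_zero]
  have hkey2 : Measure.map F (vol3.restrict V) = vol3.restrict V := by
    refine key _ mp_T2 V hV ?_ ?_
    · ext p
      simp only [Set.mem_preimage, hV_def, Set.mem_setOf_eq]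
      constructor <;> intro h <;> linarith
    · intro p hp
      simp only [hV_def, Set.mem_setOf_eq] at hp
      have h1 : p.2.1 - p.2.2 ≤ 0 := by linarith
      simp only [F, min_eq_left hp.le, max_eq_right h1, min_eq_left h1, add_zero]
      refine Prod.ext rfl (Prod.ext rfl ?_)
      simp; ring
  conv_lhs => rw [hdecomp]
  rw [Measure.map_add _ _ F_measurable, hkey1, hkey2, ← hdecomp]

/-- real density of `sExp`. -/
noncomputable def dens (l c x : ℝ) : ℝ :=
  if c ≤ x then l * Real.exp (-l * (x - c)) else 0

lemma dens_nonneg {l : ℝ} (hl : 0 ≤ l) (c x : ℝ) : 0 ≤ dens l c x := by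
  unfold dens
  split_ifs
  · positivity
  · exact le_refl 0

lemma dens_measurable (l c : ℝ) : Measurable (dens l c) :=
  Measurable.ite (measurableSet_le measurable_const measurable_id) (by fun_prop) measurable_const

lemma prod_exp_eq {k₁ k₂ k₃ x y z x' y' z' : ℝ} (h : x + y + z = x' + y' + z') :
    k₁ * Real.exp x * (k₂ * Real.exp y * (k₃ * Real.exp z))
      = k₁ * Real.exp x' * (k₂ * Real.exp y' * (k₃ * Real.exp z')) := by
  have e1 : k₁ * Real.exp x * (k₂ * Real.exp y * (k₃ * Real.exp z))
      = k₁ * k₂ * k₃ * Real.exp (x + y + z) := by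
    rw [Real.exp_add, Real.exp_add]; ring
  have e2 : k₁ * Real.exp x' * (k₂ * Real.exp y' * (k₃ * Real.exp z'))
      = k₁ * k₂ * k₃ * Real.exp (x' + y' + z') := by
    rw [Real.exp_add, Real.exp_add]; ring
  rw [e1, e2, h]

lemma dens_F (l₁ l₂ c : ℝ) (p : ℝ × ℝ × ℝ) :
    dens (l₁ + l₂) c (F p).1 * (dens l₁ c (F p).2.1 * dens l₂ c (F p).2.2)
      = dens (l₁ + l₂) c p.1 * (dens l₁ c p.2.1 * dens l₂ c p.2.2) := by
  obtain ⟨a, b, b'⟩ := p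
  rcases le_total b b' with hbc | hbc
  · have h1 : b - b' ≤ 0 := sub_nonpos.2 hbc
    simp only [F, min_eq_left hbc, max_eq_right h1, min_eq_left h1, add_zero]
    unfold dens
    by_cases h2 : c ≤ b
    · have h3 : c ≤ b' := h2.trans hbc
      by_cases hca : c ≤ a
      · have h4 : c ≤ a - (b - b') := by linarith
        simp only [if_pos h2, if_pos h3, if_pos hca, if_pos h4]
        exact prod_exp_eq (by ring)
      · simp only [if_neg hca]
        ring
    · have hcb' : ¬ c ≤ a - (b - b') ∨ True := Or.inr trivial
      simp only [if_neg h2]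
      ring
  · have h1 : (0:ℝ) ≤ b - b' := sub_nonneg.2 hbc
    simp only [F, min_eq_right hbc, max_eq_left h1, min_eq_right h1, sub_zero]
    by_cases h3 : c ≤ b'
    · have h2' : c ≤ b := h3.trans hbc
      by_cases hca : c ≤ a
      · have h4 : c ≤ a + (b - b') := by linarith
        unfold dens
        simp only [if_pos h3, if_pos h2', if_pos hca, if_pos h4]
        exact prod_exp_eq (by ring)
      · unfold dens
        simp only [if_neg hca]
        ring
    · unfold dens
      simp only [if_neg h3]
      ring

end UdTodaAux

instance sExpMeasure.instSigmaFinite (l c : ℝ) : SigmaFinite (sExpMeasure l c) := by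
  unfold sExpMeasure; infer_instance

open UdTodaAux in
open scoped ENNReal in
theorem udToda_sExp_invariance (l₁ l₂ c : ℝ) (hl₁ : 0 < l₁) (hl₂ : 0 < l₂) :
    Measure.map
      (fun p : ℝ × ℝ × ℝ =>
        (min p.2.1 p.2.2, p.1 + max (p.2.1 - p.2.2) 0, p.1 - min (p.2.1 - p.2.2) 0))
      ((sExpMeasure (l₁ + l₂) c).prod ((sExpMeasure l₁ c).prod (sExpMeasure l₂ c))) =
      (sExpMeasure (l₁ + l₂) c).prod ((sExpMeasure l₁ c).prod (sExpMeasure l₂ c)) := by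
  have hsExp : ∀ l : ℝ, sExpMeasure l c
      = volume.withDensity (fun x => ENNReal.ofReal (dens l c x)) := fun l => rfl
  set ρ : ℝ × ℝ × ℝ → ℝ≥0∞ := fun p =>
    ENNReal.ofReal (dens (l₁ + l₂) c p.1) *
      (ENNReal.ofReal (dens l₁ c p.2.1) * ENNReal.ofReal (dens l₂ c p.2.2)) with hρ_def
  have hρ_meas : Measurable ρ := by
    show Measurable ((fun p : ℝ × ℝ × ℝ => ENNReal.ofReal (dens (l₁ + l₂) c p.1)) *
      fun p => ENNReal.ofReal (dens l₁ c p.2.1) * ENNReal.ofReal (dens l₂ c p.2.2))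
    apply Measurable.mul
    · exact (ENNReal.measurable_ofReal.comp (dens_measurable _ c)).comp measurable_fst
    · exact Measurable.mul
        ((ENNReal.measurable_ofReal.comp (dens_measurable _ c)).comp
          (measurable_fst.comp measurable_snd))
        ((ENNReal.measurable_ofReal.comp (dens_measurable _ c)).comp
          (measurable_snd.comp measurable_snd))
  have h23 : (sExpMeasure l₁ c).prod (sExpMeasure l₂ c)
      = ((volume : Measure ℝ).prod volume).withDensity
          (fun q => ENNReal.ofReal (dens l₁ c q.1) * ENNReal.ofReal (dens l₂ c q.2)) := by
    rw [hsExp l₁, hsExp l₂]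
    exact UdTodaAux.prod_withDensity (ENNReal.measurable_ofReal.comp (dens_measurable l₁ c))
      (ENNReal.measurable_ofReal.comp (dens_measurable l₂ c))
  haveI hsf : SigmaFinite (((volume : Measure ℝ).prod volume).withDensity
      (fun q => ENNReal.ofReal (dens l₁ c q.1) * ENNReal.ofReal (dens l₂ c q.2))) := by
    rw [← h23]; infer_instance
  have h123 : (sExpMeasure (l₁ + l₂) c).prod ((sExpMeasure l₁ c).prod (sExpMeasure l₂ c))
      = vol3.withDensity ρ := by
    rw [h23, hsExp (l₁ + l₂)]
    exact UdTodaAux.prod_withDensity (ENNReal.measurable_ofReal.comp (dens_measurable (l₁ + l₂) c))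
      (((ENNReal.measurable_ofReal.comp (dens_measurable l₁ c)).comp measurable_fst).mul
        ((ENNReal.measurable_ofReal.comp (dens_measurable l₂ c)).comp measurable_snd))
  have hρF : (fun p => ρ (F p)) = ρ := by
    funext p
    have hn1 : 0 ≤ dens (l₁ + l₂) c (F p).1 := dens_nonneg (by positivity) _ _
    have hn2 : 0 ≤ dens l₁ c (F p).2.1 := dens_nonneg hl₁.le _ _
    have hn1' : 0 ≤ dens (l₁ + l₂) c p.1 := dens_nonneg (by positivity) _ _
    have hn2' : 0 ≤ dens l₁ c p.2.1 := dens_nonneg hl₁.le _ _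
    simp only [hρ_def]
    rw [← ENNReal.ofReal_mul hn2, ← ENNReal.ofReal_mul hn1,
      ← ENNReal.ofReal_mul hn2', ← ENNReal.ofReal_mul hn1']
    exact congrArg ENNReal.ofReal (dens_F l₁ l₂ c p)
  have hFeq : (fun p : ℝ × ℝ × ℝ =>
      (min p.2.1 p.2.2, p.1 + max (p.2.1 - p.2.2) 0, p.1 - min (p.2.1 - p.2.2) 0)) = ⇑FE := rfl
  rw [hFeq, h123]
  calc Measure.map (⇑FE) (vol3.withDensity ρ)
      = Measure.map (⇑FE) (vol3.withDensity (fun p => ρ (FE p))) := by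
        rw [show (fun p => ρ (FE p)) = ρ from by rw [show ⇑FE = F from rfl] at *; exact hρF]
    _ = (vol3.map FE).withDensity ρ := map_withDensity_equiv FE vol3 hρ_meas
    _ = vol3.withDensity ρ := by
        rw [show Measure.map (⇑FE) vol3 = vol3 from by rw [FE_coe]; exact mp_F.map_eq]
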